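/- Let d ∈ (0,1/2), let ν be a Borel measure on (0,∞) with ∫_{(0,∞)} x^{1/(1−d)} ν(dx) < ∞, and let ε > 0. Then lim_{t↓0} ∫_0^ε u · t · ν([u t^{1−d}, ∞)) du = 0, where the outer integral is a Lebesgue integral in u. -/

import Mathlib

open MeasureTheory Filter
open scoped ENNReal NNReal Topology

private lemma markov_aux (ν : Measure ℝ) {p a : ℝ} (hp : 0 < p) (ha : 0 < a)
    {s : Set ℝ} (hsm : MeasurableSet s) (hs : s ⊆ Set.Ici a) :
    ENNReal.ofReal (a ^ p) * ν s ≤ ∫⁻ x in s, ENNReal.ofReal (x ^ p) ∂ν := by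
  rw [← setLIntegral_const s]
  exact setLIntegral_mono' hsm fun x hx =>
    ENNReal.ofReal_le_ofReal (Real.rpow_le_rpow ha.le (hs hx) hp.le)

/-- For `d ∈ (0,1/2)` and a Borel measure `ν` on `(0,∞)` with finite
`(1/(1−d))`-moment, `lim_{t↓0} ∫_0^ε u·t·ν([u t^{1−d},∞)) du = 0`. -/
theorem stmt_6 (d : ℝ) (hd : d ∈ Set.Ioo (0 : ℝ) (1 / 2)) (ν : Measure ℝ)
    (hν0 : ν (Set.Iic 0) = 0)
    (hmom : ∫⁻ x in Set.Ioi 0, ENNReal.ofReal (x ^ (1 / (1 - d))) ∂ν < ⊤)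
    (ε : ℝ) (hε : 0 < ε) :
    Tendsto
      (fun t : ℝ => ∫⁻ u in Set.Ioc 0 ε,
        ENNReal.ofReal u * (ENNReal.ofReal t * ν (Set.Ici (u * t ^ (1 - d)))))
      (nhdsWithin 0 (Set.Ioi 0)) (nhds 0) := by
  obtain ⟨hd0, hd2⟩ := hd
  set p : ℝ := 1 / (1 - d) with hpdef
  have hd1 : (0 : ℝ) < 1 - d := by linarith
  have hp : 0 < p := by positivity
  have hpmul : (1 - d) * p = 1 := mul_one_div_cancel hd1.ne'
  have hp2 : p < 2 := by
    rw [hpdef, div_lt_iff₀ hd1]; linarith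
  set M : ℝ≥0∞ := ∫⁻ x in Set.Ioi 0, ENNReal.ofReal (x ^ p) ∂ν with hMdef
  have hM : M ≠ ⊤ := hmom.ne
  -- key algebra: for `u, t > 0`, `ofReal u * ofReal t = ofReal (u^(1-p)) * ofReal ((u*t^(1-d))^p)`
  have halg : ∀ u t : ℝ, 0 < u → 0 < t →
      ENNReal.ofReal u * ENNReal.ofReal t
        = ENNReal.ofReal (u ^ (1 - p)) * ENNReal.ofReal ((u * t ^ (1 - d)) ^ p) := by
    intro u t hu ht
    rw [← ENNReal.ofReal_mul hu.le, ← ENNReal.ofReal_mul (by positivity)]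
    congr 1
    rw [Real.mul_rpow hu.le (by positivity), ← Real.rpow_mul ht.le, hpmul, Real.rpow_one,
      ← mul_assoc, ← Real.rpow_add hu]
    norm_num
  have hIcipos : ∀ a : ℝ, 0 < a →
      ν (Set.Ici a) ≤ ν (Set.Ici a ∩ Set.Ioi 0) := by
    intro a ha
    calc ν (Set.Ici a) ≤ ν ((Set.Ici a ∩ Set.Ioi 0) ∪ Set.Iic 0) := by
          refine measure_mono fun x hx => ?_
          rcases le_or_gt x 0 with h | h
          · exact Or.inr h
          · exact Or.inl ⟨hx, h⟩
      _ ≤ ν (Set.Ici a ∩ Set.Ioi 0) + ν (Set.Iic 0) := measure_union_le _ _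
      _ = ν (Set.Ici a ∩ Set.Ioi 0) := by rw [hν0, add_zero]
  -- domination by `u ↦ ofReal (u^(1-p)) * M`
  have hbound : ∀ t ∈ Set.Ioi (0:ℝ), ∀ u ∈ Set.Ioc (0:ℝ) ε,
      ENNReal.ofReal u * (ENNReal.ofReal t * ν (Set.Ici (u * t ^ (1 - d))))
        ≤ ENNReal.ofReal (u ^ (1 - p)) * M := by
    intro t ht u hu
    have hu0 : 0 < u := hu.1
    have ht0 : (0:ℝ) < t := ht
    have ha : 0 < u * t ^ (1 - d) := by positivity
    calc ENNReal.ofReal u * (ENNReal.ofReal t * ν (Set.Ici (u * t ^ (1 - d))))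
        ≤ ENNReal.ofReal u * ENNReal.ofReal t * ν (Set.Ici (u * t ^ (1 - d)) ∩ Set.Ioi 0) := by
          rw [mul_assoc]
          exact mul_le_mul_right (mul_le_mul_right (hIcipos _ ha) _) _
      _ = ENNReal.ofReal (u ^ (1 - p)) *
            (ENNReal.ofReal ((u * t ^ (1 - d)) ^ p) * ν (Set.Ici (u * t ^ (1 - d)) ∩ Set.Ioi 0)) := by
          rw [halg u t hu0 ht0, mul_assoc]
      _ ≤ ENNReal.ofReal (u ^ (1 - p)) * M := by
          refine mul_le_mul_right ?_ _
          refine le_trans (markov_aux ν hp ha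
            (measurableSet_Ici.inter measurableSet_Ioi) Set.inter_subset_left) ?_
          exact lintegral_mono_set Set.inter_subset_right
  -- integrability of the bound
  have hbound_int : ∫⁻ u in Set.Ioc 0 ε, ENNReal.ofReal (u ^ (1 - p)) * M ≠ ⊤ := by
    have hint : IntegrableOn (fun u : ℝ => u ^ (1 - p)) (Set.Ioc 0 ε) := by
      rw [IntegrableOn, Measure.restrict_congr_set Ioo_ae_eq_Ioc.symm]
      exact (intervalIntegral.integrableOn_Ioo_rpow_iff hε).mpr (by linarith)
    have hfin : ∫⁻ u in Set.Ioc 0 ε, ENNReal.ofReal (u ^ (1 - p)) < ⊤ :=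
      hint.lintegral_lt_top
    rw [lintegral_mul_const' M _ hM]
    exact ENNReal.mul_ne_top hfin.ne hM
  -- the tail integral of the moment over `Ioo 0 δ`
  set G : ℝ → ℝ≥0∞ := fun δ => ∫⁻ x in Set.Ioo 0 δ, ENNReal.ofReal (x ^ p) ∂ν with hGdef
  have hGle : ∀ δ, G δ ≤ M := fun δ =>
    lintegral_mono_set Set.Ioo_subset_Ioi_self
  have hGtendsto : Tendsto (fun n : ℕ => G (1 / (n + 1))) atTop (𝓝 0) := by
    have hmeas : Measurable fun x : ℝ => ENNReal.ofReal (x ^ p) :=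
      (Real.continuous_rpow_const hp.le).measurable.ennreal_ofReal
    set μ' : Measure ℝ := ν.withDensity (fun x => ENNReal.ofReal (x ^ p)) with hμ'
    have hGn : ∀ n : ℕ, G (1 / (n + 1)) = μ' (Set.Ioo 0 (1 / (n + 1))) := by
      intro n
      rw [hμ', withDensity_apply _ measurableSet_Ioo]
    have hinter : (⋂ n : ℕ, Set.Ioo (0:ℝ) (1 / (n + 1))) = ∅ := by
      ext x
      simp only [Set.mem_iInter, Set.mem_Ioo, Set.mem_empty_iff_false, iff_false, not_forall,
        not_and, not_lt]
      by_cases hx : 0 < x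
      · obtain ⟨n, hn⟩ := exists_nat_one_div_lt hx
        exact ⟨n, fun _ => hn.le⟩
      · exact ⟨0, fun h => absurd h hx⟩
    have := tendsto_measure_iInter_atTop (μ := μ')
      (s := fun n : ℕ => Set.Ioo 0 (1 / (n + 1)))
      (fun n => measurableSet_Ioo.nullMeasurableSet)
      (fun m n hmn => Set.Ioo_subset_Ioo le_rfl
        (one_div_le_one_div_of_le (by positivity)
          (by have := (Nat.cast_le (α := ℝ)).mpr hmn; linarith)))
      ⟨0, by rw [← hGn 0]; exact (lt_of_le_of_lt (hGle _) hmom).ne⟩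
    rw [hinter] at this
    simp only [measure_empty] at this
    simpa only [Function.comp_def, hGn] using this
  -- pointwise limit
  have hlim : ∀ u ∈ Set.Ioc (0:ℝ) ε,
      Tendsto (fun t : ℝ => ENNReal.ofReal u * (ENNReal.ofReal t * ν (Set.Ici (u * t ^ (1 - d)))))
        (nhdsWithin 0 (Set.Ioi 0)) (𝓝 0) := by
    intro u hu
    have hu0 : 0 < u := hu.1
    rw [ENNReal.tendsto_nhds_zero]
    intro c hc
    -- choose δ with ofReal (u^(1-p)) * G δ ≤ c/2
    have hmul : Tendsto (fun n : ℕ => ENNReal.ofReal (u ^ (1 - p)) * G (1 / (n + 1)))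
        atTop (𝓝 0) := by
      have := ENNReal.Tendsto.const_mul (a := ENNReal.ofReal (u ^ (1 - p))) hGtendsto
        (Or.inr ENNReal.ofReal_ne_top)
      simpa using this
    obtain ⟨n, hn⟩ := (ENNReal.tendsto_nhds_zero.mp hmul (c / 2)
      (ENNReal.half_pos hc.ne')).exists
    set δ : ℝ := 1 / (n + 1) with hδdef
    have hδ0 : 0 < δ := by positivity
    set K : ℝ≥0∞ := M / ENNReal.ofReal (δ ^ p) with hKdef
    have hK : K ≠ ⊤ := (ENNReal.div_lt_top hM (by
      simp only [ne_eq, ENNReal.ofReal_eq_zero, not_le]; positivity)).ne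
    -- eventually the second term is small
    have htend : Tendsto (fun t : ℝ => ENNReal.ofReal u * K * ENNReal.ofReal t)
        (nhdsWithin 0 (Set.Ioi 0)) (𝓝 0) := by
      have h1 : Tendsto (fun t : ℝ => ENNReal.ofReal t) (nhdsWithin 0 (Set.Ioi 0)) (𝓝 0) := by
        have := (ENNReal.continuous_ofReal.tendsto 0).comp
          (tendsto_id.mono_left (nhdsWithin_le_nhds (s := Set.Ioi (0:ℝ))))
        simpa using this
      have := ENNReal.Tendsto.const_mul (a := ENNReal.ofReal u * K) h1
        (Or.inr (ENNReal.mul_ne_top ENNReal.ofReal_ne_top hK))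
      simpa using this
    filter_upwards [ENNReal.tendsto_nhds_zero.mp htend (c / 2) (ENNReal.half_pos hc.ne'),
      self_mem_nhdsWithin] with t h2 ht
    have ht0 : (0:ℝ) < t := ht
    set a : ℝ := u * t ^ (1 - d) with hadef
    have ha : 0 < a := by positivity
    -- split the tail
    have hsplit : ν (Set.Ici a) ≤ ν (Set.Ico a δ ∩ Set.Ioi 0) + ν (Set.Ici δ ∩ Set.Ioi 0) := by
      calc ν (Set.Ici a) ≤ ν (Set.Ici a ∩ Set.Ioi 0) := hIcipos a ha
        _ ≤ ν ((Set.Ico a δ ∩ Set.Ioi 0) ∪ (Set.Ici δ ∩ Set.Ioi 0)) := by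
            refine measure_mono fun x hx => ?_
            rcases lt_or_ge x δ with h | h
            · exact Or.inl ⟨⟨hx.1, h⟩, hx.2⟩
            · exact Or.inr ⟨h, hx.2⟩
        _ ≤ _ := measure_union_le _ _
    -- term 1
    have hterm1 : ENNReal.ofReal u * ENNReal.ofReal t * ν (Set.Ico a δ ∩ Set.Ioi 0)
        ≤ ENNReal.ofReal (u ^ (1 - p)) * G δ := by
      rw [halg u t hu0 ht0, mul_assoc]
      refine mul_le_mul_right ?_ _
      refine le_trans (markov_aux ν hp ha
        (measurableSet_Ico.inter measurableSet_Ioi)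
        (fun x hx => hx.1.1)) ?_
      exact lintegral_mono_set (fun x hx => ⟨hx.2, hx.1.2⟩)
    -- term 2
    have hterm2 : ν (Set.Ici δ ∩ Set.Ioi 0) ≤ K := by
      rw [hKdef, ENNReal.le_div_iff_mul_le
        (Or.inl (by simp only [ne_eq, ENNReal.ofReal_eq_zero, not_le]; positivity))
        (Or.inl ENNReal.ofReal_ne_top)]
      rw [mul_comm]
      refine le_trans (markov_aux ν hp hδ0
        (measurableSet_Ici.inter measurableSet_Ioi) Set.inter_subset_left) ?_
      exact lintegral_mono_set Set.inter_subset_right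
    calc ENNReal.ofReal u * (ENNReal.ofReal t * ν (Set.Ici a))
        ≤ ENNReal.ofReal u * (ENNReal.ofReal t *
            (ν (Set.Ico a δ ∩ Set.Ioi 0) + ν (Set.Ici δ ∩ Set.Ioi 0))) :=
          mul_le_mul_right (mul_le_mul_right hsplit _) _
      _ = ENNReal.ofReal u * ENNReal.ofReal t * ν (Set.Ico a δ ∩ Set.Ioi 0)
            + ENNReal.ofReal u * ENNReal.ofReal t * ν (Set.Ici δ ∩ Set.Ioi 0) := by
          ring
      _ ≤ c / 2 + c / 2 := by
          refine add_le_add (le_trans hterm1 hn) ?_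
          calc ENNReal.ofReal u * ENNReal.ofReal t * ν (Set.Ici δ ∩ Set.Ioi 0)
              ≤ ENNReal.ofReal u * ENNReal.ofReal t * K := mul_le_mul_right hterm2 _
            _ = ENNReal.ofReal u * K * ENNReal.ofReal t := by ring
            _ ≤ c / 2 := h2
      _ = c := ENNReal.add_halves c
  -- apply dominated convergence
  have key := tendsto_lintegral_filter_of_dominated_convergence
    (μ := volume.restrict (Set.Ioc 0 ε)) (l := nhdsWithin 0 (Set.Ioi (0:ℝ)))
    (F := fun t : ℝ => fun u : ℝ =>
      ENNReal.ofReal u * (ENNReal.ofReal t * ν (Set.Ici (u * t ^ (1 - d)))))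
    (f := fun _ => 0)
    (fun u => ENNReal.ofReal (u ^ (1 - p)) * M)
    (by
      filter_upwards [self_mem_nhdsWithin] with t ht
      have ht0 : (0:ℝ) < t := ht
      have hmono : Antitone (fun u : ℝ => ν (Set.Ici (u * t ^ (1 - d)))) := by
        intro x y hxy
        exact measure_mono (Set.Ici_subset_Ici.mpr
          (mul_le_mul_of_nonneg_right hxy (by positivity)))
      exact (ENNReal.measurable_ofReal.comp measurable_id).mul
        (measurable_const.mul hmono.measurable)
    )
    (by
      filter_upwards [self_mem_nhdsWithin] with t ht
      rw [ae_restrict_iff' measurableSet_Ioc]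
      exact ae_of_all _ fun u hu => hbound t ht u hu)
    hbound_int
    (by
      rw [ae_restrict_iff' measurableSet_Ioc]
      exact ae_of_all _ fun u hu => hlim u hu)
  simpa using key
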